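/- arXiv:1507.06275 — 3 statements merged into one kernel-verified Lean document; each statement's English description precedes it below -/
import Mathlib

section
/- For the radius ρ(I) = √(a² + (1-b)²) of a random interval I = [a,b] with independent Uniform[0,1] endpoints, if 1/2 < y ≤ 1 then P(ρ(I)² ≤ y) = y(π/2 − 2·arccos(1/√(2y))) + √(2y−1). -/
open MeasureTheory Set Real

private lemma hasDerivAt_K {y t : ℝ} (hy : 0 < y) (ht : t ^ 2 < y) :
    HasDerivAt (fun s : ℝ => (s * Real.sqrt (y - s ^ 2) + y * Real.arcsin (s / Real.sqrt y)) / 2)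
      (Real.sqrt (y - t ^ 2)) t := by
  have hyt : 0 < y - t ^ 2 := by linarith
  have hst : 0 < Real.sqrt (y - t ^ 2) := Real.sqrt_pos.2 hyt
  have hsy : 0 < Real.sqrt y := Real.sqrt_pos.2 hy
  have hy2 : Real.sqrt y ^ 2 = y := Real.sq_sqrt hy.le
  have habs1 : -Real.sqrt y < t := by nlinarith
  have habs2 : t < Real.sqrt y := by nlinarith
  have hne1 : t / Real.sqrt y ≠ 1 := ne_of_lt ((div_lt_one hsy).2 habs2)
  have hne1' : t / Real.sqrt y ≠ -1 := by
    have : -1 < t / Real.sqrt y := by rw [lt_div_iff₀ hsy]; linarith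
    exact ne_of_gt this
  have hinner : HasDerivAt (fun s : ℝ => y - s ^ 2) (-(2 * t)) t := by
    simpa using (hasDerivAt_pow 2 t).const_sub y
  have hsqrt : HasDerivAt (fun s : ℝ => Real.sqrt (y - s ^ 2))
      (-(2 * t) / (2 * Real.sqrt (y - t ^ 2))) t := hinner.sqrt hyt.ne'
  have hmul : HasDerivAt (fun s : ℝ => s * Real.sqrt (y - s ^ 2))
      (1 * Real.sqrt (y - t ^ 2) + t * (-(2 * t) / (2 * Real.sqrt (y - t ^ 2)))) t :=
    (hasDerivAt_id t).mul hsqrt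
  have hdiv : HasDerivAt (fun s : ℝ => s / Real.sqrt y) (1 / Real.sqrt y) t := by
    simpa using (hasDerivAt_id t).div_const (Real.sqrt y)
  have harc : HasDerivAt (fun s : ℝ => Real.arcsin (s / Real.sqrt y))
      (1 / Real.sqrt (1 - (t / Real.sqrt y) ^ 2) * (1 / Real.sqrt y)) t :=
    HasDerivAt.comp (h₂ := Real.arcsin) t (Real.hasDerivAt_arcsin hne1' hne1) hdiv
  have hsum := (hmul.add (harc.const_mul y)).div_const 2
  refine HasDerivAt.congr_deriv hsum ?_
  symm
  have h1 : 1 - (t / Real.sqrt y) ^ 2 = (y - t ^ 2) / y := by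
    rw [div_pow, hy2]; field_simp
  rw [h1, Real.sqrt_div hyt.le]
  have hS2 : Real.sqrt (y - t ^ 2) ^ 2 = y - t ^ 2 := Real.sq_sqrt hyt.le
  field_simp
  linear_combination hS2

private lemma contK {y : ℝ} :
    Continuous (fun s : ℝ => (s * Real.sqrt (y - s ^ 2) + y * Real.arcsin (s / Real.sqrt y)) / 2) := by
  have h1 : Continuous (fun s : ℝ => Real.sqrt (y - s ^ 2)) :=
    Real.continuous_sqrt.comp (by continuity)
  have h2 : Continuous (fun s : ℝ => Real.arcsin (s / Real.sqrt y)) :=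
    Real.continuous_arcsin.comp (continuous_id.div_const _)
  exact ((continuous_id.mul h1).add (continuous_const.mul h2)).div_const 2

private lemma integral_sqrt_sub_sq {y a b : ℝ} (hy : 0 < y) (hab : a ≤ b)
    (ha : -Real.sqrt y ≤ a) (hb : b ≤ Real.sqrt y) :
    ∫ x in a..b, Real.sqrt (y - x ^ 2) =
      (b * Real.sqrt (y - b ^ 2) + y * Real.arcsin (b / Real.sqrt y)) / 2
      - (a * Real.sqrt (y - a ^ 2) + y * Real.arcsin (a / Real.sqrt y)) / 2 := by
  have hcont : Continuous (fun x : ℝ => Real.sqrt (y - x ^ 2)) :=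
    Real.continuous_sqrt.comp (by continuity)
  have hsy : 0 < Real.sqrt y := Real.sqrt_pos.2 hy
  have hy2 : Real.sqrt y ^ 2 = y := Real.sq_sqrt hy.le
  apply intervalIntegral.integral_eq_sub_of_hasDeriv_right_of_le hab
    (contK.continuousOn)
  · intro x hx
    have hx2 : x ^ 2 < y := by
      have h1 : -Real.sqrt y < x := lt_of_le_of_lt ha hx.1
      have h2 : x < Real.sqrt y := lt_of_lt_of_le hx.2 hb
      nlinarith
    exact (hasDerivAt_K hy hx2).hasDerivWithinAt
  · exact hcont.intervalIntegrable _ _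

private lemma I1 {y : ℝ} (hy0 : 0 < y) (hy1 : y ≤ 1) :
    ∫ x in (0:ℝ)..1, Real.sqrt (y - x ^ 2) = π * y / 4 := by
  have hsy : 0 < Real.sqrt y := Real.sqrt_pos.2 hy0
  have hsy1 : Real.sqrt y ≤ 1 := Real.sqrt_le_one.2 hy1
  have hcont : Continuous (fun x : ℝ => Real.sqrt (y - x ^ 2)) :=
    Real.continuous_sqrt.comp (by continuity)
  have hy2 : Real.sqrt y ^ 2 = y := Real.sq_sqrt hy0.le
  have h1 : ∫ x in (0:ℝ)..(Real.sqrt y), Real.sqrt (y - x ^ 2) = π * y / 4 := by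
    rw [integral_sqrt_sub_sq hy0 hsy.le (by linarith) le_rfl]
    rw [hy2, div_self hsy.ne']
    simp [Real.arcsin_one]
    ring
  have h2 : ∫ x in (Real.sqrt y)..1, Real.sqrt (y - x ^ 2) = 0 := by
    rw [intervalIntegral.integral_congr (g := fun _ => (0:ℝ)) ?_]
    · simp
    · intro x hx
      rw [uIcc_of_le hsy1] at hx
      have hxy : y ≤ x ^ 2 := by nlinarith [hx.1]
      simp only
      exact Real.sqrt_eq_zero'.2 (by linarith)
  rw [← intervalIntegral.integral_add_adjacent_intervals
    (hcont.intervalIntegrable 0 (Real.sqrt y)) (hcont.intervalIntegrable (Real.sqrt y) 1), h1, h2]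
  ring

set_option maxHeartbeats 1000000 in
private lemma uv_le_one {y x : ℝ} (hy0 : 1/2 < y) (hy : y ≤ 1)
    (h : 2*y - 1 ≤ (2*x - 1)^2) :
    Real.sqrt (y - x^2) + Real.sqrt (y - (1-x)^2) ≤ 1 := by
  have hy' : 0 < y := by linarith
  have hu1 : Real.sqrt (y - x^2) ≤ 1 := Real.sqrt_le_one.2 (by nlinarith [sq_nonneg x])
  have hv1 : Real.sqrt (y - (1-x)^2) ≤ 1 := Real.sqrt_le_one.2 (by nlinarith [sq_nonneg (1-x)])
  rcases lt_or_ge (y - x^2) 0 with hu | hu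
  · rw [Real.sqrt_eq_zero'.2 hu.le]
    linarith [Real.sqrt_nonneg (y - (1-x)^2)]
  rcases lt_or_ge (y - (1-x)^2) 0 with hv | hv
  · rw [Real.sqrt_eq_zero'.2 hv.le]
    linarith [Real.sqrt_nonneg (y - x^2)]
  set u := Real.sqrt (y - x^2) with hud
  set v := Real.sqrt (y - (1-x)^2) with hvd
  have hu2 : u^2 = y - x^2 := Real.sq_sqrt hu
  have hv2 : v^2 = y - (1-x)^2 := Real.sq_sqrt hv
  have hu0 : 0 ≤ u := Real.sqrt_nonneg _
  have hv0 : 0 ≤ v := Real.sqrt_nonneg _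
  have huv : 0 ≤ u * v := mul_nonneg hu0 hv0
  have e1 : u^2 * v^2 = (y - x^2) * (y - (1-x)^2) := by rw [hu2, hv2]
  have hR : 0 ≤ 1 - u^2 - v^2 := by nlinarith
  have h4 : (2*(u*v))^2 = 4*((y-x^2)*(y-(1-x)^2)) := by
    rw [show (2*(u*v))^2 = 4*(u^2*v^2) by ring, e1]
  have hid : (1 - u^2 - v^2)^2 - (2*(u*v))^2 = 2*((2*x-1)^2 - (2*y-1)) := by
    rw [h4, hu2, hv2]; ring
  have hsq : 0 ≤ (1 - u^2 - v^2)^2 - (2*(u*v))^2 := by rw [hid]; linarith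
  have hAB : 2*(u*v) ≤ 1 - u^2 - v^2 := by nlinarith [hsq, hR, huv]
  nlinarith [hAB, hu0, hv0]

set_option maxHeartbeats 1000000 in
private lemma one_le_uv {y x : ℝ} (hy0 : 1/2 < y) (hy : y ≤ 1)
    (h : (2*x - 1)^2 ≤ 2*y - 1) :
    1 ≤ Real.sqrt (y - x^2) + Real.sqrt (y - (1-x)^2) := by
  have hy' : 0 < y := by linarith
  have hx2 : x^2 ≤ y := by nlinarith [sq_nonneg (x-1)]
  have hx2' : (1-x)^2 ≤ y := by nlinarith [sq_nonneg x]
  set u := Real.sqrt (y - x^2) with hud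
  set v := Real.sqrt (y - (1-x)^2) with hvd
  have hu2 : u^2 = y - x^2 := Real.sq_sqrt (by linarith)
  have hv2 : v^2 = y - (1-x)^2 := Real.sq_sqrt (by linarith)
  have hu0 : 0 ≤ u := Real.sqrt_nonneg _
  have hv0 : 0 ≤ v := Real.sqrt_nonneg _
  have huv : 0 ≤ u * v := mul_nonneg hu0 hv0
  have e1 : u^2 * v^2 = (y - x^2) * (y - (1-x)^2) := by rw [hu2, hv2]
  have h4 : (2*(u*v))^2 = 4*((y-x^2)*(y-(1-x)^2)) := by
    rw [show (2*(u*v))^2 = 4*(u^2*v^2) by ring, e1]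
  have hid : (1 - u^2 - v^2)^2 - (2*(u*v))^2 = 2*((2*x-1)^2 - (2*y-1)) := by
    rw [h4, hu2, hv2]; ring
  have hsq : (1 - u^2 - v^2)^2 - (2*(u*v))^2 ≤ 0 := by rw [hid]; linarith
  have hAB : 1 - u^2 - v^2 ≤ 2*(u*v) := by
    rcases le_or_gt (1 - u^2 - v^2) 0 with hR | hR
    · linarith
    · nlinarith [hsq, hR, huv]
  nlinarith [hAB, hu0, hv0]

private lemma trig_id {y : ℝ} (hy0 : 1/2 < y) (hy : y ≤ 1) :
    Real.arcsin ((1 + Real.sqrt (2*y-1)) / (2 * Real.sqrt y))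
      - Real.arcsin ((1 - Real.sqrt (2*y-1)) / (2 * Real.sqrt y))
      = 2 * Real.arccos (1 / Real.sqrt (2*y)) := by
  have hy' : 0 < y := by linarith
  set c := Real.sqrt (2*y-1) with hcdef
  set φ := Real.arccos (1 / Real.sqrt (2*y)) with hφ
  have h2y : (1:ℝ) ≤ 2*y := by linarith
  have hs2y : 1 ≤ Real.sqrt (2*y) := Real.one_le_sqrt.2 h2y
  have hs2ypos : 0 < Real.sqrt (2*y) := by linarith
  have hx11 : 1 / Real.sqrt (2*y) ≤ 1 := by
    rw [div_le_one hs2ypos]; exact hs2y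
  have hx01 : (0:ℝ) ≤ 1 / Real.sqrt (2*y) := by positivity
  have hcos : Real.cos φ = 1 / Real.sqrt (2*y) := Real.cos_arccos (by linarith) hx11
  have hsqq : (1 / Real.sqrt (2*y))^2 = 1/(2*y) := by
    rw [div_pow, one_pow, Real.sq_sqrt (by linarith)]
  have hsin : Real.sin φ = c / Real.sqrt (2*y) := by
    rw [hφ, Real.sin_arccos, hsqq, show 1 - 1/(2*y) = (2*y-1)/(2*y) by field_simp,
      Real.sqrt_div (by linarith) _]
  have h2 : Real.sqrt 2 * Real.sqrt 2 = 2 := Real.mul_self_sqrt (by norm_num)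
  have hs2pos : (0:ℝ) < Real.sqrt 2 := Real.sqrt_pos.2 (by norm_num)
  have hφ4 : φ ≤ π/4 := by
    apply Real.arccos_le_pi_div_four.2
    rw [div_le_div_iff₀ (by norm_num) hs2ypos]
    nlinarith [Real.sqrt_le_sqrt (show 2*y ≤ 2 by linarith), h2, hs2pos]
  have hφ0 : 0 ≤ φ := Real.arccos_nonneg _
  have hpi := Real.pi_pos
  have hsy : 0 < Real.sqrt y := Real.sqrt_pos.2 hy'
  have hsyq : Real.sqrt (2*y) = Real.sqrt 2 * Real.sqrt y := Real.sqrt_mul (by norm_num) y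
  have hA : Real.arcsin ((1+c)/(2*Real.sqrt y)) = π/4 + φ := by
    have hsin' : Real.sin (π/4 + φ) = (1+c)/(2*Real.sqrt y) := by
      rw [Real.sin_add, Real.sin_pi_div_four, Real.cos_pi_div_four, hcos, hsin, hsyq]
      field_simp
    rw [← hsin', Real.arcsin_sin (by linarith) (by linarith)]
  have hB : Real.arcsin ((1-c)/(2*Real.sqrt y)) = π/4 - φ := by
    have hsin' : Real.sin (π/4 - φ) = (1-c)/(2*Real.sqrt y) := by
      rw [Real.sin_sub, Real.sin_pi_div_four, Real.cos_pi_div_four, hcos, hsin, hsyq]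
      field_simp
    rw [← hsin', Real.arcsin_sin (by linarith) (by linarith)]
  rw [hA, hB]; ring

set_option maxHeartbeats 1000000 in
private lemma I3val {y : ℝ} (hy0 : 1/2 < y) (hy : y ≤ 1) :
    ∫ x in (0:ℝ)..1, max 0 (Real.sqrt (y - x^2) + Real.sqrt (y - (1-x)^2) - 1) =
      2*y*Real.arccos (1/Real.sqrt (2*y)) - Real.sqrt (2*y-1) := by
  have hy' : 0 < y := by linarith
  set c := Real.sqrt (2*y-1) with hcdef
  have hc0 : 0 ≤ c := Real.sqrt_nonneg _
  have hc2 : c^2 = 2*y-1 := Real.sq_sqrt (by linarith)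
  have hc1 : c ≤ 1 := Real.sqrt_le_one.2 (by linarith)
  have hcy : c ≤ y := by
    nlinarith [hc2, hc0, sq_nonneg (y-1), sq_nonneg (y+c), hy']
  have hsy : 0 < Real.sqrt y := Real.sqrt_pos.2 hy'
  have hxp : (1+c)/2 ≤ Real.sqrt y :=
    (Real.le_sqrt (by linarith) hy'.le).2 (by nlinarith)
  have hcu : Continuous (fun x : ℝ => Real.sqrt (y - x^2)) :=
    Real.continuous_sqrt.comp (by continuity)
  have hcv : Continuous (fun x : ℝ => Real.sqrt (y - (1-x)^2)) :=
    Real.continuous_sqrt.comp (by continuity)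
  have hcg : Continuous (fun x : ℝ =>
      max 0 (Real.sqrt (y - x^2) + Real.sqrt (y - (1-x)^2) - 1)) :=
    continuous_const.max ((hcu.add hcv).sub continuous_const)
  have hm : (0:ℝ) ≤ (1-c)/2 := by linarith
  have hm2 : (1-c)/2 ≤ (1+c)/2 := by linarith
  have hm3 : (1+c)/2 ≤ 1 := by linarith
  have hz1 : ∫ x in (0:ℝ)..((1-c)/2),
      max 0 (Real.sqrt (y - x^2) + Real.sqrt (y - (1-x)^2) - 1) = 0 := by
    rw [intervalIntegral.integral_congr (g := fun _ => (0:ℝ)) ?_]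
    · simp
    · intro x hx
      rw [uIcc_of_le hm] at hx
      have h1 : 2*y - 1 ≤ (2*x-1)^2 := by nlinarith [hx.1, hx.2, hc2, hc0]
      simp only
      exact max_eq_left (by linarith [uv_le_one hy0 hy h1])
  have hz3 : ∫ x in ((1+c)/2)..(1:ℝ),
      max 0 (Real.sqrt (y - x^2) + Real.sqrt (y - (1-x)^2) - 1) = 0 := by
    rw [intervalIntegral.integral_congr (g := fun _ => (0:ℝ)) ?_]
    · simp
    · intro x hx
      rw [uIcc_of_le hm3] at hx
      have h1 : 2*y - 1 ≤ (2*x-1)^2 := by nlinarith [hx.1, hx.2, hc2, hc0]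
      simp only
      exact max_eq_left (by linarith [uv_le_one hy0 hy h1])
  have hmid : ∫ x in ((1-c)/2)..((1+c)/2),
      max 0 (Real.sqrt (y - x^2) + Real.sqrt (y - (1-x)^2) - 1)
      = ∫ x in ((1-c)/2)..((1+c)/2),
        (Real.sqrt (y - x^2) + Real.sqrt (y - (1-x)^2) - 1) := by
    apply intervalIntegral.integral_congr
    intro x hx
    rw [uIcc_of_le hm2] at hx
    have h1 : (2*x-1)^2 ≤ 2*y-1 := by nlinarith [hx.1, hx.2, hc2, hc0]
    simp only
    exact max_eq_right (by linarith [one_le_uv hy0 hy h1])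
  have hvu : ∫ x in ((1-c)/2)..((1+c)/2), Real.sqrt (y-(1-x)^2)
      = ∫ x in ((1-c)/2)..((1+c)/2), Real.sqrt (y-x^2) := by
    have h := intervalIntegral.integral_comp_sub_left
      (a := (1-c)/2) (b := (1+c)/2) (fun t => Real.sqrt (y - t^2)) 1
    rw [show (1:ℝ) - (1+c)/2 = (1-c)/2 by ring, show (1:ℝ) - (1-c)/2 = (1+c)/2 by ring] at h
    exact h
  have hs1 : Real.sqrt (y - ((1+c)/2)^2) = (1-c)/2 := by
    rw [show y - ((1+c)/2)^2 = ((1-c)/2)^2 by linear_combination (-1/2 : ℝ) * hc2]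
    exact Real.sqrt_sq (by linarith)
  have hs2 : Real.sqrt (y - ((1-c)/2)^2) = (1+c)/2 := by
    rw [show y - ((1-c)/2)^2 = ((1+c)/2)^2 by linear_combination (-1/2 : ℝ) * hc2]
    exact Real.sqrt_sq (by linarith)
  have hintu : ∫ x in ((1-c)/2)..((1+c)/2), Real.sqrt (y - x^2)
      = (y * Real.arcsin ((1+c)/(2*Real.sqrt y)) - y * Real.arcsin ((1-c)/(2*Real.sqrt y))) / 2 := by
    have h := integral_sqrt_sub_sq hy' hm2 (by linarith) hxp
    rw [h, hs1, hs2]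
    rw [show ((1+c)/2) / Real.sqrt y = (1+c)/(2*Real.sqrt y) by rw [div_div],
        show ((1-c)/2) / Real.sqrt y = (1-c)/(2*Real.sqrt y) by rw [div_div]]
    ring
  have hmid2 : ∫ x in ((1-c)/2)..((1+c)/2),
      (Real.sqrt (y - x^2) + Real.sqrt (y - (1-x)^2) - 1)
      = 2*y*Real.arccos (1/Real.sqrt (2*y)) - c := by
    rw [intervalIntegral.integral_sub ((hcu.intervalIntegrable _ _).add (hcv.intervalIntegrable _ _))
        (intervalIntegrable_const),
      intervalIntegral.integral_add (hcu.intervalIntegrable _ _) (hcv.intervalIntegrable _ _),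
      intervalIntegral.integral_const, hvu, hintu]
    have htrig := trig_id hy0 hy
    rw [← hcdef] at htrig
    simp only [smul_eq_mul, mul_one]
    linear_combination y * htrig
  have hi1 : IntervalIntegrable (fun x : ℝ =>
      max 0 (Real.sqrt (y - x^2) + Real.sqrt (y - (1-x)^2) - 1)) volume 0 ((1-c)/2) :=
    hcg.intervalIntegrable _ _
  have hi2 : IntervalIntegrable (fun x : ℝ =>
      max 0 (Real.sqrt (y - x^2) + Real.sqrt (y - (1-x)^2) - 1)) volume ((1-c)/2) ((1+c)/2) :=
    hcg.intervalIntegrable _ _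
  have hi3 : IntervalIntegrable (fun x : ℝ =>
      max 0 (Real.sqrt (y - x^2) + Real.sqrt (y - (1-x)^2) - 1)) volume ((1+c)/2) 1 :=
    hcg.intervalIntegrable _ _
  rw [← intervalIntegral.integral_add_adjacent_intervals (hi1.trans hi2) hi3,
      ← intervalIntegral.integral_add_adjacent_intervals hi1 hi2,
      hz1, hz3, hmid, hmid2]
  ring

private def SA (y : ℝ) : Set (ℝ × ℝ) :=
  {q | q ∈ Set.Icc (0:ℝ) 1 ×ˢ Set.Icc (0:ℝ) 1 ∧ q.1^2 + (1-q.2)^2 ≤ y}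

private def SB (y : ℝ) : Set (ℝ × ℝ) :=
  {q | q ∈ Set.Icc (0:ℝ) 1 ×ˢ Set.Icc (0:ℝ) 1 ∧ q.2^2 + (1-q.1)^2 ≤ y}

private lemma mSA (y : ℝ) : MeasurableSet (SA y) := by
  have h1 : MeasurableSet {q : ℝ × ℝ | q.1^2 + (1-q.2)^2 ≤ y} :=
    measurableSet_le (by fun_prop) measurable_const
  exact (measurableSet_Icc.prod measurableSet_Icc).inter h1

private lemma mSB (y : ℝ) : MeasurableSet (SB y) := by
  have h1 : MeasurableSet {q : ℝ × ℝ | q.2^2 + (1-q.1)^2 ≤ y} :=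
    measurableSet_le (by fun_prop) measurable_const
  exact (measurableSet_Icc.prod measurableSet_Icc).inter h1

private lemma hS_eq (y : ℝ) : {q : ℝ × ℝ | q ∈ Set.Icc (0:ℝ) 1 ×ˢ Set.Icc (0:ℝ) 1 ∧
      (min q.1 q.2)^2 + (1 - max q.1 q.2)^2 ≤ y} = SA y ∪ SB y := by
  ext ⟨a, b⟩
  simp only [SA, SB, Set.mem_union, Set.mem_setOf_eq, Set.mem_prod, Set.mem_Icc]
  constructor
  · rintro ⟨hmem, hcond⟩
    rcases le_total a b with hab | hab
    · exact Or.inl ⟨hmem, by rwa [min_eq_left hab, max_eq_right hab] at hcond⟩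
    · exact Or.inr ⟨hmem, by rwa [min_eq_right hab, max_eq_left hab] at hcond⟩
  · rintro (⟨hmem, hcond⟩ | ⟨hmem, hcond⟩)
    · refine ⟨hmem, ?_⟩
      rcases le_total a b with hab | hab
      · rwa [min_eq_left hab, max_eq_right hab]
      · rw [min_eq_right hab, max_eq_left hab]
        nlinarith [hcond, hab]
    · refine ⟨hmem, ?_⟩
      rcases le_total a b with hab | hab
      · rw [min_eq_left hab, max_eq_right hab]
        nlinarith [hcond, hab]
      · rwa [min_eq_right hab, max_eq_left hab]

private lemma sliceA {y : ℝ} (hy0 : 1/2 < y) (hy : y ≤ 1) (x : ℝ) :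
    volume (Prod.mk x ⁻¹' SA y)
      = Set.indicator (Icc (0:ℝ) 1) (fun x => ENNReal.ofReal (Real.sqrt (y - x^2))) x := by
  by_cases hx : x ∈ Icc (0:ℝ) 1
  · rw [Set.indicator_of_mem hx]
    obtain ⟨hx0, hx1⟩ := hx
    by_cases hx2 : x^2 ≤ y
    · have hu0 : (0:ℝ) ≤ y - x^2 := by linarith
      have hu1 : Real.sqrt (y - x^2) ≤ 1 := Real.sqrt_le_one.2 (by nlinarith [sq_nonneg x])
      have hus : Real.sqrt (y - x^2) ^ 2 = y - x^2 := Real.sq_sqrt hu0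
      have hset : Prod.mk x ⁻¹' SA y = Icc (1 - Real.sqrt (y - x^2)) 1 := by
        ext z
        simp only [SA, Set.mem_preimage, Set.mem_setOf_eq, Set.mem_prod, Set.mem_Icc]
        constructor
        · rintro ⟨⟨-, hz0, hz1⟩, hcond⟩
          refine ⟨?_, hz1⟩
          have h1z : 1 - z ≤ Real.sqrt (y - x^2) :=
            (Real.le_sqrt (by linarith) hu0).2 (by linarith)
          linarith
        · rintro ⟨hz0, hz1⟩
          have h0z : (0:ℝ) ≤ z := by linarith
          refine ⟨⟨⟨hx0, hx1⟩, h0z, hz1⟩, ?_⟩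
          have h1 : 1 - z ≤ Real.sqrt (y - x^2) := by linarith
          have h2 : (0:ℝ) ≤ 1 - z := by linarith
          nlinarith [h1, h2, hus, Real.sqrt_nonneg (y - x^2)]
      rw [hset, Real.volume_Icc]
      congr 1
      ring
    · have hset : Prod.mk x ⁻¹' SA y = ∅ := by
        apply Set.eq_empty_iff_forall_notMem.2
        rintro z ⟨-, hcond⟩
        exact hx2 (by nlinarith [sq_nonneg (1-z)])
      rw [hset, measure_empty, Real.sqrt_eq_zero'.2 (by linarith : y - x^2 ≤ 0),
        ENNReal.ofReal_zero]
  · rw [Set.indicator_of_notMem hx]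
    have hset : Prod.mk x ⁻¹' SA y = ∅ := by
      apply Set.eq_empty_iff_forall_notMem.2
      rintro z ⟨hmem, -⟩
      exact hx hmem.1
    rw [hset, measure_empty]

private lemma sliceB {y : ℝ} (hy0 : 1/2 < y) (hy : y ≤ 1) (x : ℝ) :
    volume (Prod.mk x ⁻¹' SB y)
      = Set.indicator (Icc (0:ℝ) 1) (fun x => ENNReal.ofReal (Real.sqrt (y - (1-x)^2))) x := by
  by_cases hx : x ∈ Icc (0:ℝ) 1
  · rw [Set.indicator_of_mem hx]
    obtain ⟨hx0, hx1⟩ := hx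
    by_cases hx2 : (1-x)^2 ≤ y
    · have hv0 : (0:ℝ) ≤ y - (1-x)^2 := by linarith
      have hv1 : Real.sqrt (y - (1-x)^2) ≤ 1 :=
        Real.sqrt_le_one.2 (by nlinarith [sq_nonneg (1-x)])
      have hvs : Real.sqrt (y - (1-x)^2) ^ 2 = y - (1-x)^2 := Real.sq_sqrt hv0
      have hset : Prod.mk x ⁻¹' SB y = Icc 0 (Real.sqrt (y - (1-x)^2)) := by
        ext z
        simp only [SB, Set.mem_preimage, Set.mem_setOf_eq, Set.mem_prod, Set.mem_Icc]
        constructor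
        · rintro ⟨⟨-, hz0, hz1⟩, hcond⟩
          exact ⟨hz0, (Real.le_sqrt hz0 hv0).2 (by linarith)⟩
        · rintro ⟨hz0, hz1⟩
          have hz1' : z ≤ 1 := by linarith
          refine ⟨⟨⟨hx0, hx1⟩, hz0, hz1'⟩, ?_⟩
          nlinarith [hz1, hz0, hvs, Real.sqrt_nonneg (y - (1-x)^2)]
      rw [hset, Real.volume_Icc]
      congr 1
      ring
    · have hset : Prod.mk x ⁻¹' SB y = ∅ := by
        apply Set.eq_empty_iff_forall_notMem.2
        rintro z ⟨-, hcond⟩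
        exact hx2 (by nlinarith [sq_nonneg z])
      rw [hset, measure_empty, Real.sqrt_eq_zero'.2 (by linarith : y - (1-x)^2 ≤ 0),
        ENNReal.ofReal_zero]
  · rw [Set.indicator_of_notMem hx]
    have hset : Prod.mk x ⁻¹' SB y = ∅ := by
      apply Set.eq_empty_iff_forall_notMem.2
      rintro z ⟨hmem, -⟩
      exact hx hmem.1
    rw [hset, measure_empty]

set_option maxHeartbeats 1000000 in
private lemma sliceAB {y : ℝ} (hy0 : 1/2 < y) (hy : y ≤ 1) (x : ℝ) :
    volume (Prod.mk x ⁻¹' (SA y ∩ SB y))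
      = Set.indicator (Icc (0:ℝ) 1) (fun x => ENNReal.ofReal
          (max 0 (Real.sqrt (y - x^2) + Real.sqrt (y - (1-x)^2) - 1))) x := by
  by_cases hx : x ∈ Icc (0:ℝ) 1
  · rw [Set.indicator_of_mem hx]
    obtain ⟨hx0, hx1⟩ := hx
    by_cases hx2 : x^2 ≤ y
    · by_cases hx2' : (1-x)^2 ≤ y
      · have hu0 : (0:ℝ) ≤ y - x^2 := by linarith
        have hv0 : (0:ℝ) ≤ y - (1-x)^2 := by linarith
        have hu1 : Real.sqrt (y - x^2) ≤ 1 := Real.sqrt_le_one.2 (by nlinarith [sq_nonneg x])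
        have hv1 : Real.sqrt (y - (1-x)^2) ≤ 1 :=
          Real.sqrt_le_one.2 (by nlinarith [sq_nonneg (1-x)])
        have hus : Real.sqrt (y - x^2) ^ 2 = y - x^2 := Real.sq_sqrt hu0
        have hvs : Real.sqrt (y - (1-x)^2) ^ 2 = y - (1-x)^2 := Real.sq_sqrt hv0
        have hset : Prod.mk x ⁻¹' (SA y ∩ SB y)
            = Icc (1 - Real.sqrt (y - x^2)) (Real.sqrt (y - (1-x)^2)) := by
          ext z
          simp only [SA, SB, Set.mem_preimage, Set.mem_inter_iff, Set.mem_setOf_eq,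
            Set.mem_prod, Set.mem_Icc]
          constructor
          · rintro ⟨⟨⟨-, hz0, hz1⟩, hcondA⟩, -, hcondB⟩
            constructor
            · have h1z : 1 - z ≤ Real.sqrt (y - x^2) :=
                (Real.le_sqrt (by linarith) hu0).2 (by linarith)
              linarith
            · exact (Real.le_sqrt hz0 hv0).2 (by linarith)
          · rintro ⟨hz0, hz1⟩
            have h0z : (0:ℝ) ≤ z := by linarith
            have hz1' : z ≤ 1 := by linarith
            have hcA : x^2 + (1-z)^2 ≤ y := by
              have h1 : 1 - z ≤ Real.sqrt (y - x^2) := by linarith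
              have h2 : (0:ℝ) ≤ 1 - z := by linarith
              nlinarith [h1, h2, hus, Real.sqrt_nonneg (y - x^2)]
            have hcB : z^2 + (1-x)^2 ≤ y := by
              nlinarith [mul_self_le_mul_self h0z hz1, hvs]
            exact ⟨⟨⟨⟨hx0, hx1⟩, h0z, hz1'⟩, hcA⟩, ⟨⟨hx0, hx1⟩, h0z, hz1'⟩, hcB⟩
        rw [hset, Real.volume_Icc]
        rcases le_or_gt (Real.sqrt (y - x^2) + Real.sqrt (y - (1-x)^2) - 1) 0 with hle | hlt
        · rw [max_eq_left hle, ENNReal.ofReal_zero, ENNReal.ofReal_eq_zero.2 (by linarith)]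
        · rw [max_eq_right hlt.le]
          congr 1
          ring
      · have hset : Prod.mk x ⁻¹' (SA y ∩ SB y) = ∅ := by
          apply Set.eq_empty_iff_forall_notMem.2
          rintro z ⟨-, -, hcondB⟩
          exact hx2' (by nlinarith [sq_nonneg z])
        have hu1 : Real.sqrt (y - x^2) ≤ 1 := Real.sqrt_le_one.2 (by nlinarith [sq_nonneg x])
        rw [hset, measure_empty, Real.sqrt_eq_zero'.2 (by linarith : y - (1-x)^2 ≤ 0),
          max_eq_left (by linarith), ENNReal.ofReal_zero]
    · have hset : Prod.mk x ⁻¹' (SA y ∩ SB y) = ∅ := by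
        apply Set.eq_empty_iff_forall_notMem.2
        rintro z ⟨⟨-, hcondA⟩, -⟩
        exact hx2 (by nlinarith [sq_nonneg (1-z)])
      have hv1 : Real.sqrt (y - (1-x)^2) ≤ 1 :=
        Real.sqrt_le_one.2 (by nlinarith [sq_nonneg (1-x)])
      rw [hset, measure_empty, Real.sqrt_eq_zero'.2 (by linarith : y - x^2 ≤ 0),
        max_eq_left (by linarith), ENNReal.ofReal_zero]
  · rw [Set.indicator_of_notMem hx]
    have hset : Prod.mk x ⁻¹' (SA y ∩ SB y) = ∅ := by
      apply Set.eq_empty_iff_forall_notMem.2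
      rintro z ⟨⟨hmem, -⟩, -⟩
      exact hx hmem.1
    rw [hset, measure_empty]

private lemma vol_eq {T : Set (ℝ × ℝ)} (mT : MeasurableSet T) (g : ℝ → ℝ)
    (hg : Continuous g) (hg0 : ∀ x, 0 ≤ g x)
    (hslice : ∀ x : ℝ, volume (Prod.mk x ⁻¹' T)
      = Set.indicator (Icc (0:ℝ) 1) (fun x => ENNReal.ofReal (g x)) x) :
    volume T = ENNReal.ofReal (∫ x in (0:ℝ)..1, g x) := by
  rw [Measure.volume_eq_prod, Measure.prod_apply mT]
  simp_rw [hslice]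
  rw [lintegral_indicator measurableSet_Icc,
    ← ofReal_integral_eq_lintegral_ofReal (hg.integrableOn_Icc) (ae_of_all _ hg0)]
  congr 1
  rw [intervalIntegral.integral_of_le zero_le_one, ← integral_Icc_eq_integral_Ioc]

set_option maxHeartbeats 1000000 in
/-- For the radius `ρ(I) = √(a² + (1-b)²)` of a random interval with
independent Uniform[0,1] endpoints (`a = min`, `b = max`), if `1/2 < y ≤ 1`
then `P(ρ(I)² ≤ y) = y(π/2 − 2·arccos(1/√(2y))) + √(2y−1)`. -/
theorem radius_sq_cdf_large (y : ℝ) (hy0 : 1/2 < y) (hy : y ≤ 1) :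
    volume {q : ℝ × ℝ | q ∈ Set.Icc (0:ℝ) 1 ×ˢ Set.Icc (0:ℝ) 1 ∧
      (min q.1 q.2)^2 + (1 - max q.1 q.2)^2 ≤ y} =
    ENNReal.ofReal (y * (π / 2 - 2 * Real.arccos (1 / Real.sqrt (2*y))) +
      Real.sqrt (2*y - 1)) := by
  have hy' : 0 < y := by linarith
  have volA : volume (SA y) = ENNReal.ofReal (π * y / 4) := by
    rw [vol_eq (mSA y) (fun x => Real.sqrt (y - x^2)) (Real.continuous_sqrt.comp (by continuity))
      (fun x => Real.sqrt_nonneg _) (sliceA hy0 hy)]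
    congr 1
    exact I1 hy' hy
  have hIB : ∫ x in (0:ℝ)..1, Real.sqrt (y - (1-x)^2) = π * y / 4 := by
    have h := intervalIntegral.integral_comp_sub_left (a := (0:ℝ)) (b := 1)
      (fun t => Real.sqrt (y - t^2)) 1
    simp only [sub_zero, sub_self] at h
    rw [h]
    exact I1 hy' hy
  have volB : volume (SB y) = ENNReal.ofReal (π * y / 4) := by
    rw [vol_eq (mSB y) (fun x => Real.sqrt (y - (1-x)^2)) (Real.continuous_sqrt.comp (by continuity))
      (fun x => Real.sqrt_nonneg _) (sliceB hy0 hy), hIB]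
  have hcg : Continuous (fun x : ℝ =>
      max 0 (Real.sqrt (y - x^2) + Real.sqrt (y - (1-x)^2) - 1)) :=
    continuous_const.max (((Real.continuous_sqrt.comp (by continuity)).add
      (Real.continuous_sqrt.comp (by continuity))).sub continuous_const)
  have volAB : volume (SA y ∩ SB y)
      = ENNReal.ofReal (2*y*Real.arccos (1/Real.sqrt (2*y)) - Real.sqrt (2*y-1)) := by
    rw [vol_eq ((mSA y).inter (mSB y)) (fun x => max 0 (Real.sqrt (y - x^2) + Real.sqrt (y - (1-x)^2) - 1)) hcg (fun x => le_max_left _ _) (sliceAB hy0 hy)]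
    congr 1
    exact I3val hy0 hy
  have hI3nonneg : 0 ≤ 2*y*Real.arccos (1/Real.sqrt (2*y)) - Real.sqrt (2*y-1) := by
    rw [← I3val hy0 hy]
    exact intervalIntegral.integral_nonneg zero_le_one (fun u _ => le_max_left _ _)
  have key := measure_union_add_inter (μ := volume) (SA y) (mSB y)
  rw [volA, volB, volAB] at key
  rw [hS_eq]
  have h2 : ENNReal.ofReal (π*y/4) + ENNReal.ofReal (π*y/4)
      = volume (SA y ∪ SB y) + ENNReal.ofReal
          (2*y*Real.arccos (1/Real.sqrt (2*y)) - Real.sqrt (2*y-1)) := key.symm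
  have h3 := ENNReal.sub_eq_of_eq_add ENNReal.ofReal_ne_top h2
  rw [← h3, ← ENNReal.ofReal_add (by nlinarith [Real.pi_pos] : (0:ℝ) ≤ π*y/4)
      (by nlinarith [Real.pi_pos] : (0:ℝ) ≤ π*y/4), ← ENNReal.ofReal_sub _ hI3nonneg]
  congr 1
  ring
end

section
/- The area of the intersection of the two disks of radius √y (for 1/2 ≤ y ≤ 1) centered at (0,1) and (1,0) equals y·arccos(1/y − 1) − √(2y − 1). -/
open MeasureTheory Real Set

lemma lens_key_ineq {y A B x : ℝ} (hA0 : 0 ≤ A) (hB0 : 0 ≤ B) (hA1 : A ≤ 1) (hB1 : B ≤ 1)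
    (hA2 : A^2 = y - x^2) (hB2 : B^2 = y - (x-1)^2) (hAB : 1 ≤ A + B) :
    (2*x - 1)^2 ≤ 2*y - 1 := by
  have h₁ : 0 ≤ 2*A*B + (A^2 + B^2) - 1 := by nlinarith
  have h₂ : 0 ≤ 1 - (A - B)^2 := by nlinarith
  nlinarith [mul_nonneg h₁ h₂]

lemma lens_sum_ge_one {y A B x : ℝ} (hA0 : 0 ≤ A) (hB0 : 0 ≤ B)
    (hA2 : A^2 = y - x^2) (hB2 : B^2 = y - (x-1)^2) (hq : (2*x - 1)^2 ≤ 2*y - 1) :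
    1 ≤ A + B := by
  by_contra hlt
  push_neg at hlt
  have h1 : 2*A*B < 1 - (A^2 + B^2) := by nlinarith [mul_nonneg hA0 hB0]
  have h3 : 4*A^2*B^2 < (1 - (A^2 + B^2))^2 := by nlinarith [mul_nonneg hA0 hB0]
  nlinarith [h3]

lemma lens_piece_deriv (y : ℝ) (hy : 0 < y) (x : ℝ) (hx : x^2 < y) :
    HasDerivAt (fun t => (t * Real.sqrt (y - t^2) + y * Real.arcsin (t / Real.sqrt y)) / 2)
      (Real.sqrt (y - x^2)) x := by
  have hA : 0 < y - x^2 := by linarith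
  have hsy : 0 < Real.sqrt y := Real.sqrt_pos.mpr hy
  have hsy2 : Real.sqrt y ^ 2 = y := Real.sq_sqrt hy.le
  have hA2 : Real.sqrt (y - x^2) ^ 2 = y - x^2 := Real.sq_sqrt hA.le
  have hApos : 0 < Real.sqrt (y - x^2) := Real.sqrt_pos.mpr hA
  have hq : (x / Real.sqrt y)^2 < 1 := by
    rw [div_pow, hsy2, div_lt_one hy]; exact hx
  have habs : |x / Real.sqrt y| < 1 := by
    rw [abs_lt]
    constructor <;> nlinarith [sq_nonneg (x / Real.sqrt y + 1), sq_nonneg (x / Real.sqrt y - 1)]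
  have h₁ : x / Real.sqrt y ≠ -1 := by
    intro h; rw [h] at habs; simp at habs
  have h₂ : x / Real.sqrt y ≠ 1 := by
    intro h; rw [h] at habs; simp at habs
  have hinner : HasDerivAt (fun t : ℝ => y - t^2) (-(2*x)) x := by
    simpa using ((hasDerivAt_pow 2 x).const_sub y)
  have hsq : HasDerivAt (fun t : ℝ => Real.sqrt (y - t^2))
      (-(2*x) / (2 * Real.sqrt (y - x^2))) x := hinner.sqrt hA.ne'
  have hmul : HasDerivAt (fun t : ℝ => t * Real.sqrt (y - t^2))
      (1 * Real.sqrt (y - x^2) + x * (-(2*x) / (2 * Real.sqrt (y - x^2)))) x :=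
    (hasDerivAt_id' x).mul hsq
  have hlin : HasDerivAt (fun t : ℝ => t / Real.sqrt y) (1 / Real.sqrt y) x := by
    simpa using (hasDerivAt_id x).div_const (Real.sqrt y)
  have harc : HasDerivAt (fun t : ℝ => Real.arcsin (t / Real.sqrt y))
      (1 / Real.sqrt (1 - (x / Real.sqrt y)^2) * (1 / Real.sqrt y)) x := by
    exact (Real.hasDerivAt_arcsin h₁ h₂).comp x hlin
  have hval : Real.sqrt (1 - (x / Real.sqrt y)^2) = Real.sqrt (y - x^2) / Real.sqrt y := by
    rw [show 1 - (x / Real.sqrt y)^2 = (y - x^2)/y by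
        field_simp [div_pow, hsy2]; rw [hsy2]; ring, Real.sqrt_div hA.le]
  have h := ((hmul.add (harc.const_mul y)).div_const 2)
  convert h using 1
  rfl
  rfl
  rfl
  rw [hval]
  field_simp
  linear_combination hA2

lemma volume_region_cc {f g : ℝ → ℝ} (hf : Measurable f) (hg : Measurable g)
    {s : Set ℝ} (hs : MeasurableSet s) :
    volume {p : ℝ × ℝ | p.1 ∈ s ∧ p.2 ∈ Set.Icc (f p.1) (g p.1)} =
      ∫⁻ x in s, ENNReal.ofReal (g x - f x) := by
  rw [MeasureTheory.Measure.volume_eq_prod,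
    Measure.prod_apply (measurableSet_region_between_cc hf hg hs)]
  have h : (fun x => volume (Prod.mk x ⁻¹' {p : ℝ × ℝ | p.1 ∈ s ∧ p.2 ∈ Set.Icc (f p.1) (g p.1)}))
      = s.indicator fun x => ENNReal.ofReal (g x - f x) := by
    classical
    funext x
    rw [indicator_apply]
    split_ifs with h
    · have hx : Prod.mk x ⁻¹' {p : ℝ × ℝ | p.1 ∈ s ∧ p.2 ∈ Set.Icc (f p.1) (g p.1)}
        = Set.Icc (f x) (g x) := by ext a; simp [h]
      rw [hx, Real.volume_Icc]
    · have hx : Prod.mk x ⁻¹' {p : ℝ × ℝ | p.1 ∈ s ∧ p.2 ∈ Set.Icc (f p.1) (g p.1)} = ∅ := by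
        ext a; simp [h]
      rw [hx, measure_empty]
  rw [h, lintegral_indicator hs]

set_option maxHeartbeats 1600000 in
/-- The area of the intersection of the two disks of radius `√y`
(for `1/2 ≤ y ≤ 1`) centered at `(0,1)` and `(1,0)` equals
`y·arccos(1/y − 1) − √(2y − 1)`. -/
theorem lens_area (y : ℝ) (hy0 : 1/2 ≤ y) (hy : y ≤ 1) :
    volume ({p : ℝ × ℝ | p.1^2 + (p.2 - 1)^2 ≤ y} ∩
      {p : ℝ × ℝ | (p.1 - 1)^2 + p.2^2 ≤ y}) =
    ENNReal.ofReal (y * Real.arccos (1/y - 1) - Real.sqrt (2*y - 1)) := by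
  have hy0' : (0:ℝ) < y := by linarith
  set s : ℝ := Real.sqrt (2*y - 1) with hs_def
  have hs0 : 0 ≤ s := Real.sqrt_nonneg _
  have hs2 : s^2 = 2*y - 1 := Real.sq_sqrt (by linarith)
  have hs1 : s ≤ 1 := Real.sqrt_le_one.mpr (by linarith)
  set a : ℝ := (1 - s)/2 with ha_def
  set b : ℝ := (1 + s)/2 with hb_def
  have ha0 : 0 ≤ a := by rw [ha_def]; linarith
  have hb0 : 0 ≤ b := by rw [hb_def]; linarith
  have hb1 : b ≤ 1 := by rw [hb_def]; linarith
  have hab : a ≤ b := by rw [ha_def, hb_def]; linarith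
  have hab1 : a + b = 1 := by rw [ha_def, hb_def]; ring
  have hbas : b - a = s := by rw [ha_def, hb_def]; ring
  have hab2 : a^2 + b^2 = y := by
    rw [ha_def, hb_def]; linear_combination hs2 / 2
  have hmulab : a*b = (1-y)/2 := by
    rw [ha_def, hb_def]; linear_combination (-1/4) * hs2
  have hsy' : s ≤ y := by nlinarith [hs2, sq_nonneg (y-1)]
  have hb2y : b^2 ≤ y := by rw [hb_def]; nlinarith [hs2]
  have hba : b - 1 = -a := by rw [ha_def, hb_def]; ring
  have hsqb : Real.sqrt (y - a^2) = b := by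
    rw [show y - a^2 = b^2 by linarith, Real.sqrt_sq hb0]
  have hsqa : Real.sqrt (y - b^2) = a := by
    rw [show y - b^2 = a^2 by linarith, Real.sqrt_sq ha0]
  -- the set equality
  have hseteq : ({p : ℝ × ℝ | p.1^2 + (p.2 - 1)^2 ≤ y} ∩
      {p : ℝ × ℝ | (p.1 - 1)^2 + p.2^2 ≤ y}) =
      {p : ℝ × ℝ | p.1 ∈ Set.Icc a b ∧
        p.2 ∈ Set.Icc (1 - Real.sqrt (y - p.1^2)) (Real.sqrt (y - (p.1 - 1)^2))} := by
    ext ⟨x, z⟩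
    simp only [Set.mem_inter_iff, Set.mem_setOf_eq, Set.mem_Icc]
    constructor
    · rintro ⟨h1, h2⟩
      have hx2 : x^2 ≤ y := by linarith [sq_nonneg (z - 1)]
      have hx1 : (x - 1)^2 ≤ y := by linarith [sq_nonneg z]
      have hA0 : 0 ≤ Real.sqrt (y - x^2) := Real.sqrt_nonneg _
      have hB0 : 0 ≤ Real.sqrt (y - (x-1)^2) := Real.sqrt_nonneg _
      have hA2 : Real.sqrt (y - x^2)^2 = y - x^2 := Real.sq_sqrt (by linarith)
      have hB2 : Real.sqrt (y - (x-1)^2)^2 = y - (x-1)^2 := Real.sq_sqrt (by linarith)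
      have hA1 : Real.sqrt (y - x^2) ≤ 1 := Real.sqrt_le_one.mpr (by linarith [sq_nonneg x])
      have hB1 : Real.sqrt (y - (x-1)^2) ≤ 1 := Real.sqrt_le_one.mpr (by linarith [sq_nonneg (x-1)])
      set A := Real.sqrt (y - x^2)
      set B := Real.sqrt (y - (x-1)^2)
      have hzA : 1 - A ≤ z := by
        have h : |z - 1| ≤ A := by
          rw [← Real.sqrt_sq_eq_abs]; exact Real.sqrt_le_sqrt (by linarith)
        linarith [(abs_le.mp h).1]
      have hzB : z ≤ B := by
        have h : |z| ≤ B := by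
          rw [← Real.sqrt_sq_eq_abs]; exact Real.sqrt_le_sqrt (by linarith)
        linarith [(abs_le.mp h).2]
      have hAB : 1 ≤ A + B := by linarith
      have key : (2*x - 1)^2 ≤ 2*y - 1 := lens_key_ineq hA0 hB0 hA1 hB1 hA2 hB2 hAB
      have habs : |2*x - 1| ≤ s := by
        rw [← Real.sqrt_sq_eq_abs, hs_def]
        exact Real.sqrt_le_sqrt key
      obtain ⟨hl, hr⟩ := abs_le.mp habs
      exact ⟨⟨by rw [ha_def]; linarith, by rw [hb_def]; linarith⟩, hzA, hzB⟩
    · rintro ⟨⟨hxa, hxb⟩, hz1, hz2⟩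
      have hxb2 : x^2 ≤ b^2 := pow_le_pow_left₀ (le_trans ha0 hxa) hxb 2
      have hx2 : x^2 ≤ y := by linarith
      have hxb2' : (x - 1)^2 ≤ b^2 :=
        sq_le_sq' (by linarith) (by linarith)
      have hx1 : (x - 1)^2 ≤ y := by linarith
      have hA0 : 0 ≤ Real.sqrt (y - x^2) := Real.sqrt_nonneg _
      have hB0 : 0 ≤ Real.sqrt (y - (x-1)^2) := Real.sqrt_nonneg _
      have hA2 : Real.sqrt (y - x^2)^2 = y - x^2 := Real.sq_sqrt (by linarith)
      have hB2 : Real.sqrt (y - (x-1)^2)^2 = y - (x-1)^2 := Real.sq_sqrt (by linarith)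
      have hA1 : Real.sqrt (y - x^2) ≤ 1 := Real.sqrt_le_one.mpr (by linarith [sq_nonneg x])
      have hB1 : Real.sqrt (y - (x-1)^2) ≤ 1 := Real.sqrt_le_one.mpr (by linarith [sq_nonneg (x-1)])
      set A := Real.sqrt (y - x^2)
      set B := Real.sqrt (y - (x-1)^2)
      constructor
      · have h := sq_le_sq' (by linarith : -A ≤ z - 1) (by linarith : z - 1 ≤ A)
        linarith
      · have h := sq_le_sq' (by linarith : -B ≤ z) hz2
        linarith
  -- lower ≤ upper on [a,b]
  have hfg : ∀ x ∈ Set.Icc a b,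
      1 - Real.sqrt (y - x^2) ≤ Real.sqrt (y - (x-1)^2) := by
    rintro x ⟨hxa, hxb⟩
    have hxb2 : x^2 ≤ b^2 := pow_le_pow_left₀ (le_trans ha0 hxa) hxb 2
    have hx2 : x^2 ≤ y := by linarith
    have hxb2' : (x - 1)^2 ≤ b^2 := sq_le_sq' (by linarith) (by linarith)
    have hx1 : (x - 1)^2 ≤ y := by linarith
    have hq : (2*x - 1)^2 ≤ 2*y - 1 := by
      have h := sq_le_sq' (by rw [ha_def] at hxa; linarith : -s ≤ 2*x - 1)
        (by rw [hb_def] at hxb; linarith : 2*x - 1 ≤ s)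
      linarith [hs2]
    have hA2 : Real.sqrt (y - x^2)^2 = y - x^2 := Real.sq_sqrt (by linarith)
    have hB2 : Real.sqrt (y - (x-1)^2)^2 = y - (x-1)^2 := Real.sq_sqrt (by linarith)
    have h := lens_sum_ge_one (Real.sqrt_nonneg (y - x^2)) (Real.sqrt_nonneg (y - (x-1)^2))
      hA2 hB2 hq
    linarith
  -- measurability of bounding functions
  have hfm : Measurable (fun x : ℝ => 1 - Real.sqrt (y - x^2)) :=
    (continuous_const.sub ((continuous_const.sub (continuous_pow 2)).sqrt)).measurable
  have hgm : Measurable (fun x : ℝ => Real.sqrt (y - (x-1)^2)) :=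
    ((continuous_const.sub ((continuous_id.sub continuous_const).pow 2)).sqrt).measurable
  rw [hseteq, volume_region_cc hfm hgm measurableSet_Icc]
  -- convert lintegral to integral
  have hcont : Continuous (fun x : ℝ =>
      Real.sqrt (y - (x-1)^2) - (1 - Real.sqrt (y - x^2))) :=
    ((continuous_const.sub ((continuous_id.sub continuous_const).pow 2)).sqrt).sub
      (continuous_const.sub ((continuous_const.sub (continuous_pow 2)).sqrt))
  have hint : Integrable (fun x : ℝ =>
      Real.sqrt (y - (x-1)^2) - (1 - Real.sqrt (y - x^2)))
      (volume.restrict (Set.Icc a b)) := hcont.integrableOn_Icc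
  have hnn : 0 ≤ᵐ[volume.restrict (Set.Icc a b)] (fun x : ℝ =>
      Real.sqrt (y - (x-1)^2) - (1 - Real.sqrt (y - x^2))) :=
    (ae_restrict_iff' measurableSet_Icc).mpr
      (ae_of_all _ fun x hx => sub_nonneg.mpr (hfg x hx))
  rw [← MeasureTheory.ofReal_integral_eq_lintegral_ofReal hint hnn]
  congr 1
  rw [MeasureTheory.integral_Icc_eq_integral_Ioc, ← intervalIntegral.integral_of_le hab]
  -- FTC
  set H : ℝ → ℝ := fun t =>
    (t * Real.sqrt (y - t^2) + y * Real.arcsin (t / Real.sqrt y)) / 2 +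
      (((t-1) * Real.sqrt (y - (t-1)^2) + y * Real.arcsin ((t-1) / Real.sqrt y)) / 2 - t)
    with hH_def
  have hHcont : ContinuousOn H (Set.Icc a b) := by
    apply Continuous.continuousOn
    rw [hH_def]
    have c1 : Continuous (fun t : ℝ => t * Real.sqrt (y - t^2)) :=
      continuous_id.mul ((continuous_const.sub (continuous_pow 2)).sqrt)
    have c2 : Continuous (fun t : ℝ => Real.arcsin (t / Real.sqrt y)) :=
      Real.continuous_arcsin.comp (continuous_id.div_const _)
    have c3 : Continuous (fun t : ℝ => (t-1) * Real.sqrt (y - (t-1)^2)) :=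
      (continuous_id.sub continuous_const).mul
        ((continuous_const.sub ((continuous_id.sub continuous_const).pow 2)).sqrt)
    have c4 : Continuous (fun t : ℝ => Real.arcsin ((t-1) / Real.sqrt y)) :=
      Real.continuous_arcsin.comp ((continuous_id.sub continuous_const).div_const _)
    exact ((c1.add (continuous_const.mul c2)).div_const 2).add
      (((c3.add (continuous_const.mul c4)).div_const 2).sub continuous_id)
  have hHderiv : ∀ x ∈ Set.Ioo a b, HasDerivAt H
      (Real.sqrt (y - (x-1)^2) - (1 - Real.sqrt (y - x^2))) x := by
    rintro x ⟨hxa, hxb⟩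
    have hx0 : 0 ≤ x := le_of_lt (lt_of_le_of_lt ha0 hxa)
    have hx2 : x^2 < y := by
      have := pow_lt_pow_left₀ hxb hx0 (n := 2) two_ne_zero
      linarith
    have hx1 : (x-1)^2 < y := by
      have h1 : 1 - x < b := by linarith
      have := pow_lt_pow_left₀ h1 (by linarith) (n := 2) two_ne_zero
      have e : (x-1)^2 = (1-x)^2 := by ring
      linarith
    have d1 := lens_piece_deriv y hy0' x hx2
    have d2 : HasDerivAt (fun t : ℝ =>
        ((t-1) * Real.sqrt (y - (t-1)^2) + y * Real.arcsin ((t-1) / Real.sqrt y)) / 2)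
        (Real.sqrt (y - (x-1)^2)) x := by
      have := (lens_piece_deriv y hy0' (x-1) hx1).comp x ((hasDerivAt_id x).sub_const 1)
      convert this using 1
      rfl
      rfl
      rfl
      ring
    have d3 : HasDerivAt (fun t : ℝ => t) 1 x := hasDerivAt_id x
    have := d1.add (d2.sub d3)
    rw [hH_def]
    convert this using 1
    rfl
    rfl
    rfl
    ring
  have hII : IntervalIntegrable (fun x : ℝ =>
      Real.sqrt (y - (x-1)^2) - (1 - Real.sqrt (y - x^2))) volume a b :=
    hcont.intervalIntegrable a b
  rw [intervalIntegral.integral_eq_sub_of_hasDerivAt_of_le hab hHcont hHderiv hII]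
  -- evaluate
  have hsy : 0 < Real.sqrt y := Real.sqrt_pos.mpr hy0'
  have hsy2 : Real.sqrt y ^ 2 = y := Real.sq_sqrt hy0'.le
  have hbsy : b ≤ Real.sqrt y := by nlinarith [hb2y, hsy.le]
  have hasy : a ≤ Real.sqrt y := le_trans hab hbsy
  have hbd1 : b / Real.sqrt y ≤ 1 := by rw [div_le_one hsy]; exact hbsy
  have hbd0 : 0 ≤ b / Real.sqrt y := div_nonneg hb0 hsy.le
  have had1 : a / Real.sqrt y ≤ 1 := by rw [div_le_one hsy]; exact hasy
  have had0 : 0 ≤ a / Real.sqrt y := div_nonneg ha0 hsy.le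
  set α : ℝ := Real.arcsin (b / Real.sqrt y) with hα_def
  set β : ℝ := Real.arcsin (a / Real.sqrt y) with hβ_def
  have hsinα : Real.sin α = b / Real.sqrt y := Real.sin_arcsin (by linarith) hbd1
  have hsinβ : Real.sin β = a / Real.sqrt y := Real.sin_arcsin (by linarith) had1
  have hcosα : Real.cos α = a / Real.sqrt y := by
    rw [hα_def, Real.cos_arcsin,
      show 1 - (b / Real.sqrt y)^2 = (a / Real.sqrt y)^2 by
        field_simp [div_pow, hsy2]; linarith,
      Real.sqrt_sq had0]
  have hcosβ : Real.cos β = b / Real.sqrt y := by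
    rw [hβ_def, Real.cos_arcsin,
      show 1 - (a / Real.sqrt y)^2 = (b / Real.sqrt y)^2 by
        field_simp [div_pow, hsy2]; linarith,
      Real.sqrt_sq hbd0]
  have hcos : Real.cos (α - β) = 1/y - 1 := by
    rw [Real.cos_sub, hcosα, hcosβ, hsinα, hsinβ]
    have hyy : Real.sqrt y * Real.sqrt y = y := Real.mul_self_sqrt hy0'.le
    field_simp
    nlinarith [hmulab, hyy]
  have h0 : 0 ≤ α - β := by
    have h := Real.monotone_arcsin ((div_le_div_iff_of_pos_right hsy).mpr hab)
    rw [← hα_def, ← hβ_def] at h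
    linarith
  have hπ : α - β ≤ π := by
    have h1 := Real.arcsin_le_pi_div_two (b / Real.sqrt y)
    have h2 := Real.arcsin_nonneg.mpr had0
    rw [← hα_def] at h1
    rw [← hβ_def] at h2
    linarith [Real.pi_pos]
  have harccos : Real.arccos (1/y - 1) = α - β := by
    rw [← hcos, Real.arccos_cos h0 hπ]
  rw [harccos]
  have ha1' : a - 1 = -b := by linarith
  simp only [hH_def]
  rw [hba, ha1']
  rw [neg_sq, neg_sq, hsqa, hsqb, neg_div, neg_div, Real.arcsin_neg, Real.arcsin_neg,
    ← hα_def, ← hβ_def, ← hbas]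
  ring
end

section
/- Let ω_n → ∞ be any function, and set x = (1/2)√(ω_n/n). In a random interval graph on n vertices, the probability that at least one of the n random intervals contains [x, 1−x] tends to 1 as n → ∞. Consequently, P(Δ(G) ≥ n − ω_n) → 1. -/
open MeasureTheory Set Filter
open scoped Classical
open scoped ENNReal

/-- The uniform probability measure on the unit square. -/
noncomputable def unifSq : Measure (ℝ × ℝ) :=
  volume.restrict (Set.Icc (0:ℝ) 1 ×ˢ Set.Icc (0:ℝ) 1)

/-- The random interval associated to a pair of endpoints. -/
def rInt (q : ℝ × ℝ) : Set ℝ := Set.Icc (min q.1 q.2) (max q.1 q.2)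

/-- The law of the `n` independent random intervals. -/
noncomputable def rigMeasure (n : ℕ) : Measure (Fin n → ℝ × ℝ) :=
  Measure.pi fun _ => unifSq

/-- The degree of vertex `i` in the random interval graph. -/
noncomputable def rigDeg {n : ℕ} (ω : Fin n → ℝ × ℝ) (i : Fin n) : ℕ :=
  (Finset.univ.filter (fun j : Fin n => j ≠ i ∧
    (rInt (ω i) ∩ rInt (ω j)).Nonempty)).card

/-- The maximum degree of the random interval graph. -/
noncomputable def rigMaxDeg {n : ℕ} (ω : Fin n → ℝ × ℝ) : ℕ :=
  Finset.univ.sup (rigDeg ω)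

/-! ### Basic measure computations -/

lemma unifSq_apply {S : Set (ℝ × ℝ)} (hS : MeasurableSet S) :
    unifSq S = volume (S ∩ (Set.Icc (0:ℝ) 1 ×ˢ Set.Icc (0:ℝ) 1)) := by
  rw [unifSq, Measure.restrict_apply hS]

instance : IsProbabilityMeasure unifSq := by
  constructor
  rw [unifSq_apply MeasurableSet.univ, Set.univ_inter, Measure.volume_eq_prod,
    Measure.prod_prod, Real.volume_Icc]
  norm_num

instance (n : ℕ) : IsProbabilityMeasure (rigMeasure n) := by
  unfold rigMeasure; infer_instance

lemma unifSq_prod {x : ℝ} (h0 : 0 ≤ x) (h1 : x ≤ 1) :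
    unifSq (Set.Icc (0:ℝ) x ×ˢ Set.Icc (1-x) 1) = ENNReal.ofReal (x * x) := by
  rw [unifSq_apply ((measurableSet_Icc).prod measurableSet_Icc),
    Set.inter_eq_self_of_subset_left
      (Set.prod_mono (Set.Icc_subset_Icc le_rfl h1) (Set.Icc_subset_Icc (by linarith) le_rfl)),
    Measure.volume_eq_prod, Measure.prod_prod, Real.volume_Icc, Real.volume_Icc,
    ← ENNReal.ofReal_mul (by linarith)]
  ring_nf

/-- Upper bound on the probability that no interval contains `[x,1-x]`. -/
lemma notcontain (n : ℕ) {x : ℝ} (h0 : 0 ≤ x) (h1 : x ≤ 1) :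
    (rigMeasure n) {ω : Fin n → ℝ × ℝ | ∃ i : Fin n, Set.Icc x (1-x) ⊆ rInt (ω i)}ᶜ ≤
      (ENNReal.ofReal (1 - x*x))^n := by
  set S : Set (ℝ × ℝ) := Set.Icc (0:ℝ) x ×ˢ Set.Icc (1-x) 1 with hSdef
  have hS : MeasurableSet S := measurableSet_Icc.prod measurableSet_Icc
  have hmem : ∀ q : ℝ × ℝ, q ∈ S → Set.Icc x (1-x) ⊆ rInt q := by
    intro q hq
    exact Set.Icc_subset_Icc (le_trans (min_le_left _ _) hq.1.2)
      (le_trans hq.2.1 (le_max_right _ _))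
  have hsub : {ω : Fin n → ℝ × ℝ | ∃ i : Fin n, Set.Icc x (1-x) ⊆ rInt (ω i)}ᶜ ⊆
      Set.pi Set.univ (fun _ : Fin n => Sᶜ) := by
    intro ω hω i _
    intro hS'
    exact hω ⟨i, hmem _ hS'⟩
  refine le_trans (measure_mono hsub) ?_
  have hval : unifSq Sᶜ ≤ ENNReal.ofReal (1 - x*x) := by
    rw [measure_compl hS (measure_ne_top _ _), measure_univ, unifSq_prod h0 h1,
      ENNReal.ofReal_sub 1 (by positivity), ENNReal.ofReal_one]
  rw [rigMeasure, Measure.pi_pi, Finset.prod_const, Finset.card_univ, Fintype.card_fin]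
  exact pow_le_pow_left' hval n

/-! ### The bad set and the Markov bound -/

def badSet (y : ℝ) : Set (ℝ × ℝ) := {q | max q.1 q.2 < y ∨ 1 - y < min q.1 q.2}

lemma badSet_measurable (y : ℝ) : MeasurableSet (badSet y) := by
  refine MeasurableSet.union ?_ ?_
  · exact (measurable_fst.max measurable_snd) measurableSet_Iio
  · exact (measurable_fst.min measurable_snd) measurableSet_Ioi

lemma unifSq_badSet {y : ℝ} (hy0 : 0 ≤ y) :
    unifSq (badSet y) ≤ ENNReal.ofReal (2*(y*y)) := by
  have h1 : unifSq (badSet y) ≤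
      volume ((Set.Icc (0:ℝ) y ×ˢ Set.Icc (0:ℝ) y) ∪ (Set.Icc (1-y) 1 ×ˢ Set.Icc (1-y) 1)) := by
    rw [unifSq_apply (badSet_measurable y)]
    refine measure_mono ?_
    rintro ⟨a, b⟩ ⟨hbad, hsq⟩
    rcases hbad with h | h
    · exact Or.inl ⟨⟨hsq.1.1, le_of_lt (lt_of_le_of_lt (le_max_left a b) h)⟩,
        ⟨hsq.2.1, le_of_lt (lt_of_le_of_lt (le_max_right a b) h)⟩⟩
    · exact Or.inr ⟨⟨le_of_lt (lt_of_lt_of_le h (min_le_left a b)), hsq.1.2⟩,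
        ⟨le_of_lt (lt_of_lt_of_le h (min_le_right a b)), hsq.2.2⟩⟩
  refine le_trans h1 (le_trans (measure_union_le _ _) ?_)
  rw [Measure.volume_eq_prod, Measure.prod_prod, Measure.prod_prod, Real.volume_Icc,
    Real.volume_Icc]
  have : (1:ℝ) - (1-y) = y := by ring
  rw [this, sub_zero, ← ENNReal.ofReal_mul hy0, ← ENNReal.ofReal_add (by positivity) (by positivity)]
  exact ENNReal.ofReal_le_ofReal (by nlinarith)

lemma rigMeasure_eval_preimage (n : ℕ) (j : Fin n) {S : Set (ℝ × ℝ)} :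
    (rigMeasure n) (Function.eval j ⁻¹' S) = unifSq S := by
  have h : Function.eval j ⁻¹' S = Set.pi Set.univ (fun i => if i = j then S else Set.univ) := by
    ext ω
    simp only [Set.mem_preimage, Set.mem_pi, Set.mem_univ, true_implies, Function.eval]
    constructor
    · intro h i
      rcases eq_or_ne i j with rfl | hij
      · simpa using h
      · simp [hij]
    · intro h
      simpa using h j
  rw [h, rigMeasure, Measure.pi_pi,
    Finset.prod_eq_single j (fun i _ hij => by rw [if_neg hij]; exact measure_univ)
      (by simp)]
  simp

lemma markov_bound (n : ℕ) {y ε : ℝ} (hy0 : 0 ≤ y) (hε : 0 < ε) :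
    (rigMeasure n) {ω : Fin n → ℝ × ℝ |
        ε ≤ ((Finset.univ.filter (fun j : Fin n => ω j ∈ badSet y)).card : ℝ)} ≤
      ((n : ℝ≥0∞) * ENNReal.ofReal (2*(y*y))) / ENNReal.ofReal ε := by
  set f : (Fin n → ℝ × ℝ) → ℝ≥0∞ := fun ω => ∑ j : Fin n, (badSet y).indicator 1 (ω j) with hf
  have hterm : ∀ j : Fin n,
      Measurable (fun ω : Fin n → ℝ × ℝ => (badSet y).indicator (1 : (ℝ×ℝ) → ℝ≥0∞) (ω j)) :=
    fun j => (measurable_const.indicator (badSet_measurable y)).comp (measurable_pi_apply j)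
  have hfm : Measurable f := Finset.measurable_sum _ (fun j _ => hterm j)
  have hcard : ∀ ω : Fin n → ℝ × ℝ,
      ((Finset.univ.filter (fun j : Fin n => ω j ∈ badSet y)).card : ℝ≥0∞) = f ω := by
    intro ω
    rw [Finset.card_filter, Nat.cast_sum]
    refine Finset.sum_congr rfl (fun j _ => ?_)
    by_cases hj : ω j ∈ badSet y <;> simp [hj]
  have hsub : {ω : Fin n → ℝ × ℝ |
        ε ≤ ((Finset.univ.filter (fun j : Fin n => ω j ∈ badSet y)).card : ℝ)}
      ⊆ {ω | ENNReal.ofReal ε ≤ f ω} := by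
    intro ω hω
    rw [Set.mem_setOf_eq, ← hcard ω, ← ENNReal.ofReal_natCast]
    exact ENNReal.ofReal_le_ofReal hω
  refine le_trans (measure_mono hsub) (le_trans
    (meas_ge_le_lintegral_div hfm.aemeasurable (ENNReal.ofReal_pos.2 hε).ne'
      ENNReal.ofReal_ne_top) ?_)
  have hint : ∫⁻ ω, f ω ∂(rigMeasure n) ≤ (n : ℝ≥0∞) * ENNReal.ofReal (2*(y*y)) := by
    rw [hf, lintegral_finset_sum _ (fun j _ => hterm j)]
    have hj : ∀ j : Fin n,
        ∫⁻ ω, (badSet y).indicator (1 : (ℝ×ℝ)→ℝ≥0∞) (ω j) ∂(rigMeasure n) = unifSq (badSet y) := by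
      intro j
      have heq : (fun ω : Fin n → ℝ × ℝ => (badSet y).indicator (1 : (ℝ×ℝ)→ℝ≥0∞) (ω j))
          = (Function.eval j ⁻¹' (badSet y)).indicator 1 := by
        ext ω
        by_cases h : ω j ∈ badSet y <;>
          simp [Set.indicator_apply, Function.eval, h]
      rw [heq, lintegral_indicator_one ((badSet_measurable y).preimage (measurable_pi_apply j)),
        rigMeasure_eval_preimage n j]
    rw [Finset.sum_congr rfl (fun j _ => hj j), Finset.sum_const, Finset.card_univ,
      Fintype.card_fin, nsmul_eq_mul]
    exact mul_le_mul_right (unifSq_badSet hy0) _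
  exact ENNReal.div_le_div_right hint _

/-! ### Deterministic degree bound -/

lemma maxDeg_lower {n : ℕ} (ω : Fin n → ℝ × ℝ) {y W : ℝ} (hy : y ≤ 1/2)
    (i : Fin n) (hi : Set.Icc y (1-y) ⊆ rInt (ω i))
    (hM : ((Finset.univ.filter (fun j : Fin n => ω j ∈ badSet y)).card : ℝ) + 1 ≤ W) :
    (n:ℝ) - W ≤ (rigMaxDeg ω : ℝ) := by
  set P : Fin n → Prop := fun j => j ≠ i ∧ (rInt (ω i) ∩ rInt (ω j)).Nonempty with hP
  have hsub : Finset.univ.filter (fun j : Fin n => ¬ P j) ⊆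
      insert i (Finset.univ.filter (fun j : Fin n => ω j ∈ badSet y)) := by
    intro j hj
    rw [Finset.mem_filter] at hj
    rcases eq_or_ne j i with rfl | hji
    · exact Finset.mem_insert_self _ _
    · refine Finset.mem_insert_of_mem (Finset.mem_filter.2 ⟨Finset.mem_univ _, ?_⟩)
      by_contra hbad
      rw [badSet, Set.mem_setOf_eq, not_or, not_lt, not_lt] at hbad
      set p : ℝ := max y (min (ω j).1 (ω j).2) with hp
      have hp1 : p ∈ rInt (ω i) := hi ⟨le_max_left _ _, max_le (by linarith) hbad.2⟩
      have hp2 : p ∈ rInt (ω j) := ⟨le_max_right _ _, max_le hbad.1 (min_le_max)⟩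
      exact hj.2 ⟨hji, ⟨p, hp1, hp2⟩⟩
  have hcard : (Finset.univ.filter (fun j : Fin n => ¬ P j)).card ≤
      (Finset.univ.filter (fun j : Fin n => ω j ∈ badSet y)).card + 1 := by
    refine le_trans (Finset.card_le_card hsub) (Finset.card_insert_le _ _)
  have hsplit : (Finset.univ.filter P).card + (Finset.univ.filter (fun j => ¬ P j)).card = n := by
    rw [Finset.card_filter_add_card_filter_not, Finset.card_univ, Fintype.card_fin]
  have hdeg : rigDeg ω i = (Finset.univ.filter P).card := rfl
  have h1 : (n:ℝ) - W ≤ (rigDeg ω i : ℝ) := by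
    have h2 : ((Finset.univ.filter (fun j : Fin n => ¬ P j)).card : ℝ) ≤ W := by
      have := hcard
      have h3 : ((Finset.univ.filter (fun j : Fin n => ¬ P j)).card : ℝ) ≤
          ((Finset.univ.filter (fun j : Fin n => ω j ∈ badSet y)).card : ℝ) + 1 := by
        exact_mod_cast hcard
      linarith
    have h4 : ((Finset.univ.filter P).card : ℝ) +
        ((Finset.univ.filter (fun j => ¬ P j)).card : ℝ) = n := by exact_mod_cast hsplit
    rw [hdeg]
    linarith
  refine le_trans h1 ?_
  exact_mod_cast Nat.cast_le.2 (Finset.le_sup (f := rigDeg ω) (Finset.mem_univ i))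

/-! ### Analytic helpers -/

lemma one_sub_pow_le_exp {t : ℝ} (h0 : 0 ≤ t) (h1 : t ≤ 1) (n : ℕ) :
    (1 - t)^n ≤ Real.exp (-((n:ℝ) * t)) := by
  have hexp : 1 - t ≤ Real.exp (-t) := by
    have := Real.add_one_le_exp (-t)
    linarith
  calc (1 - t)^n ≤ (Real.exp (-t))^n := pow_le_pow_left₀ (by linarith) hexp n
    _ = Real.exp (-((n:ℝ) * t)) := by
        rw [← Real.exp_nat_mul]; ring_nf

lemma tendsto_sqrt_comp {w : ℕ → ℝ} (hw : Tendsto w atTop atTop) :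
    Tendsto (fun n => Real.sqrt (w n)) atTop atTop := by
  rw [tendsto_atTop] at hw ⊢
  intro b
  filter_upwards [hw (b*b)] with n hn
  calc b ≤ |b| := le_abs_self b
    _ = Real.sqrt (b*b) := (Real.sqrt_mul_self_eq_abs b).symm
    _ ≤ Real.sqrt (w n) := Real.sqrt_le_sqrt hn

lemma tendsto_min_atTop {f g : ℕ → ℝ} (hf : Tendsto f atTop atTop)
    (hg : Tendsto g atTop atTop) : Tendsto (fun n => min (f n) (g n)) atTop atTop := by
  rw [tendsto_atTop] at hf hg ⊢
  intro b
  filter_upwards [hf b, hg b] with n h1 h2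
  exact le_min h1 h2

lemma tendsto_exp_neg_quarter {v : ℕ → ℝ} (hv : Tendsto v atTop atTop) :
    Tendsto (fun n => Real.exp (-(v n / 4))) atTop (nhds 0) := by
  refine Real.tendsto_exp_atBot.comp ?_
  have h1 : Tendsto (fun n => v n / 4) atTop atTop := hv.atTop_div_const (by norm_num)
  exact tendsto_neg_atTop_atBot.comp h1

/-- toReal of measures is at most 1. -/
lemma toReal_le_one {α : Type*} [MeasurableSpace α] (μ : Measure α) [IsProbabilityMeasure μ]
    (s : Set α) : (μ s).toReal ≤ 1 := by
  have := ENNReal.toReal_mono ENNReal.one_ne_top (prob_le_one (μ := μ) (s := s))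
  simpa using this
set_option maxHeartbeats 1000000 in
/-- Let `ω_n → ∞` and `x = (1/2)√(ω_n/n)`. With probability tending to 1, some
random interval contains `[x, 1−x]`; consequently `P(Δ(G) ≥ n − ω_n) → 1`. -/
theorem max_degree_near_full (w : ℕ → ℝ) (hw : Tendsto w atTop atTop) :
    Tendsto (fun n : ℕ =>
        ((rigMeasure n) {ω | ∃ i : Fin n,
          Set.Icc (Real.sqrt (w n / n) / 2) (1 - Real.sqrt (w n / n) / 2)
            ⊆ rInt (ω i)}).toReal)
      atTop (nhds 1) ∧
    Tendsto (fun n : ℕ =>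
        ((rigMeasure n) {ω | (n : ℝ) - w n ≤ (rigMaxDeg ω : ℝ)}).toReal)
      atTop (nhds 1) := by
  constructor
  · -- Part 1
    have hlow : Tendsto (fun n : ℕ => 1 - Real.exp (-(min (w n) (n:ℝ) / 4)))
        atTop (nhds 1) := by
      have h := tendsto_exp_neg_quarter (tendsto_min_atTop hw tendsto_natCast_atTop_atTop)
      simpa using tendsto_const_nhds.sub h
    refine tendsto_of_tendsto_of_tendsto_of_le_of_le' hlow tendsto_const_nhds ?_
      (Eventually.of_forall fun n => toReal_le_one _ _)
    filter_upwards [hw.eventually_ge_atTop 0, eventually_ge_atTop 1] with n hw0 hn1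
    set x : ℝ := Real.sqrt (w n / n) / 2 with hxdef
    set m : ℝ := min x (1/2) with hmdef
    set E : Set (Fin n → ℝ × ℝ) :=
      {ω | ∃ i : Fin n, Set.Icc x (1-x) ⊆ rInt (ω i)} with hEdef
    have hnpos : (0:ℝ) < n := by exact_mod_cast hn1
    have ha0 : 0 ≤ w n / n := div_nonneg hw0 hnpos.le
    have hx0 : 0 ≤ x := by positivity
    have hm0 : 0 ≤ m := le_min hx0 (by norm_num)
    have hm12 : m ≤ 1/2 := min_le_right _ _
    have hm1 : m ≤ 1 := by linarith
    have hxx : x * x = (w n / n) / 4 := by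
      rw [hxdef]
      have h := Real.mul_self_sqrt ha0
      nlinarith [h]
    -- monotonicity of the event
    have hmono : {ω : Fin n → ℝ × ℝ | ∃ i : Fin n, Set.Icc m (1-m) ⊆ rInt (ω i)} ⊆ E := by
      rintro ω ⟨i, hi⟩
      exact ⟨i, Set.Subset.trans
        (Set.Icc_subset_Icc (min_le_left _ _) (by have := min_le_left x (1/2); linarith)) hi⟩
    have hEc : (rigMeasure n) Eᶜ ≤ (ENNReal.ofReal (1 - m * m))^n :=
      le_trans (measure_mono (Set.compl_subset_compl.2 hmono)) (notcontain n hm0 hm1)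
    have honeplus : 1 ≤ ((rigMeasure n) E).toReal + ((rigMeasure n) Eᶜ).toReal := by
      have h := measure_union_le (μ := rigMeasure n) E Eᶜ
      rw [Set.union_compl_self, measure_univ] at h
      have h2 := ENNReal.toReal_mono
        (ENNReal.add_ne_top.2 ⟨measure_ne_top _ _, measure_ne_top _ _⟩) h
      rwa [ENNReal.toReal_one, ENNReal.toReal_add (measure_ne_top _ _) (measure_ne_top _ _)] at h2
    have hmm0 : 0 ≤ 1 - m * m := by nlinarith
    have hEcReal : ((rigMeasure n) Eᶜ).toReal ≤ Real.exp (-(min (w n) (n:ℝ) / 4)) := by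
      have h1 : ((rigMeasure n) Eᶜ).toReal ≤ (1 - m*m)^n := by
        calc ((rigMeasure n) Eᶜ).toReal
            ≤ ((ENNReal.ofReal (1 - m*m))^n).toReal :=
              ENNReal.toReal_mono (ENNReal.pow_ne_top ENNReal.ofReal_ne_top) hEc
          _ = (1 - m*m)^n := by rw [ENNReal.toReal_pow, ENNReal.toReal_ofReal hmm0]
      refine le_trans h1 (le_trans (one_sub_pow_le_exp (by positivity) (by nlinarith) n) ?_)
      rw [Real.exp_le_exp, neg_le_neg_iff]
      -- min (w n) n / 4 ≤ n * (m * m)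
      rcases le_total (w n / n) 1 with h | h
      · have hs : Real.sqrt (w n / n) ≤ 1 := Real.sqrt_le_one.2 h
        have hmx : m = x := min_eq_left (by rw [hxdef]; linarith)
        have hwn : w n ≤ n := (div_le_one hnpos).1 h
        rw [hmx, hxx, min_eq_left hwn]
        have hne : (n:ℝ) * (w n / n / 4) = w n / 4 := by field_simp
        linarith
      · have hs : 1 ≤ Real.sqrt (w n / n) := Real.one_le_sqrt.2 h
        have hmx : m = 1/2 := min_eq_right (by rw [hxdef]; linarith)
        have hwn : (n:ℝ) ≤ w n := by
          have := (one_le_div hnpos).1 h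
          linarith
        rw [hmx, min_eq_right hwn]
        nlinarith
    linarith
  · -- Part 2
    have hsq : Tendsto (fun n => Real.sqrt (w n)) atTop atTop := tendsto_sqrt_comp hw
    have hu : Tendsto (fun n => min (Real.sqrt (w n)) (n:ℝ)) atTop atTop :=
      tendsto_min_atTop hsq tendsto_natCast_atTop_atTop
    have hlow : Tendsto (fun n : ℕ =>
        1 - Real.exp (-(min (Real.sqrt (w n)) (n:ℝ) / 4)) - 1 / Real.sqrt (w n))
        atTop (nhds 1) := by
      have h1 := tendsto_exp_neg_quarter hu
      have h2 : Tendsto (fun n => 1 / Real.sqrt (w n)) atTop (nhds 0) := by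
        simpa [one_div, Function.comp_def] using tendsto_inv_atTop_zero.comp hsq
      have := (tendsto_const_nhds (x := (1:ℝ)) (f := atTop)).sub h1 |>.sub h2
      simpa using this
    refine tendsto_of_tendsto_of_tendsto_of_le_of_le' hlow tendsto_const_nhds ?_
      (Eventually.of_forall fun n => toReal_le_one _ _)
    filter_upwards [hw.eventually_ge_atTop 4, eventually_ge_atTop 1] with n hw4 hn1
    have hnpos : (0:ℝ) < n := by exact_mod_cast hn1
    set u : ℝ := min (Real.sqrt (w n)) (n:ℝ) with hudef
    set y : ℝ := Real.sqrt (u / n) / 2 with hydef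
    have hu0 : 0 ≤ u := le_min (Real.sqrt_nonneg _) hnpos.le
    have hun : u ≤ n := min_le_right _ _
    have ha0 : 0 ≤ u / n := div_nonneg hu0 hnpos.le
    have ha1 : u / n ≤ 1 := (div_le_one hnpos).2 hun
    have hy0 : 0 ≤ y := by positivity
    have hy12 : y ≤ 1/2 := by
      have h := Real.sqrt_le_one.2 ha1
      rw [hydef]; linarith
    have hysq' : 0 ≤ y * y := mul_self_nonneg y
    have hyy : y * y = (u / n) / 4 := by
      rw [hydef]
      have h := Real.mul_self_sqrt ha0
      nlinarith [h]
    have hny : (n:ℝ) * (y * y) = u / 4 := by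
      rw [hyy]; field_simp
    have hysq : y * y ≤ 1/4 := by rw [hyy]; linarith
    set E : Set (Fin n → ℝ × ℝ) :=
      {ω | ∃ i : Fin n, Set.Icc y (1-y) ⊆ rInt (ω i)} with hEdef
    set A : Set (Fin n → ℝ × ℝ) :=
      {ω | ((Finset.univ.filter (fun j : Fin n => ω j ∈ badSet y)).card : ℝ) + 1 ≤ w n}
      with hAdef
    set F : Set (Fin n → ℝ × ℝ) := {ω | (n:ℝ) - w n ≤ (rigMaxDeg ω : ℝ)} with hFdef
    -- the cover
    have hcover : (Set.univ : Set (Fin n → ℝ × ℝ)) ⊆ F ∪ (Eᶜ ∪ Aᶜ) := by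
      intro ω _
      by_cases hωE : ω ∈ E
      · by_cases hωA : ω ∈ A
        · obtain ⟨i, hi⟩ := hωE
          exact Or.inl (maxDeg_lower ω hy12 i hi hωA)
        · exact Or.inr (Or.inr hωA)
      · exact Or.inr (Or.inl hωE)
    have honeplus : 1 ≤ ((rigMeasure n) F).toReal + ((rigMeasure n) Eᶜ).toReal
        + ((rigMeasure n) Aᶜ).toReal := by
      have h := measure_mono (μ := rigMeasure n) hcover
      rw [measure_univ] at h
      have h2 := le_trans h (le_trans (measure_union_le _ _)
        (add_le_add_right (measure_union_le _ _) _))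
      have h3 := ENNReal.toReal_mono (ENNReal.add_ne_top.2 ⟨measure_ne_top _ _,
        ENNReal.add_ne_top.2 ⟨measure_ne_top _ _, measure_ne_top _ _⟩⟩) h2
      rwa [ENNReal.toReal_one, ENNReal.toReal_add (measure_ne_top _ _)
        (ENNReal.add_ne_top.2 ⟨measure_ne_top _ _, measure_ne_top _ _⟩),
        ENNReal.toReal_add (measure_ne_top _ _) (measure_ne_top _ _), ← add_assoc] at h3
    -- bound on Eᶜ
    have hEcReal : ((rigMeasure n) Eᶜ).toReal ≤ Real.exp (-(u / 4)) := by
      have hEc : (rigMeasure n) Eᶜ ≤ (ENNReal.ofReal (1 - y * y))^n :=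
        notcontain n hy0 (by linarith)
      have h1 : ((rigMeasure n) Eᶜ).toReal ≤ (1 - y*y)^n := by
        calc ((rigMeasure n) Eᶜ).toReal
            ≤ ((ENNReal.ofReal (1 - y*y))^n).toReal :=
              ENNReal.toReal_mono (ENNReal.pow_ne_top ENNReal.ofReal_ne_top) hEc
          _ = (1 - y*y)^n := by
              rw [ENNReal.toReal_pow, ENNReal.toReal_ofReal (by linarith)]
      refine le_trans h1 (le_trans (one_sub_pow_le_exp hysq' (by linarith) n) ?_)
      rw [Real.exp_le_exp, neg_le_neg_iff, hny]
    -- bound on Aᶜ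
    have hAcReal : ((rigMeasure n) Aᶜ).toReal ≤ 1 / Real.sqrt (w n) := by
      have hsubA : Aᶜ ⊆ {ω : Fin n → ℝ × ℝ |
          w n - 1 ≤ ((Finset.univ.filter (fun j : Fin n => ω j ∈ badSet y)).card : ℝ)} := by
        intro ω hω
        rw [Set.mem_compl_iff, hAdef, Set.mem_setOf_eq, not_le] at hω
        rw [Set.mem_setOf_eq]
        linarith
      have hεpos : (0:ℝ) < w n - 1 := by linarith
      have hmk := le_trans (measure_mono hsubA) (markov_bound n hy0 hεpos)
      have hne : ((n : ℝ≥0∞) * ENNReal.ofReal (2*(y*y))) / ENNReal.ofReal (w n - 1) ≠ ⊤ := by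
        refine (ENNReal.div_lt_top ?_ (ENNReal.ofReal_pos.2 hεpos).ne').ne
        exact ENNReal.mul_ne_top (ENNReal.natCast_ne_top n) ENNReal.ofReal_ne_top
      have h1 := ENNReal.toReal_mono hne hmk
      rw [ENNReal.toReal_div, ENNReal.toReal_mul, show ((n : ℝ≥0∞)).toReal = (n:ℝ) from rfl,
        ENNReal.toReal_ofReal (by positivity), ENNReal.toReal_ofReal hεpos.le] at h1
      have h2 : (n:ℝ) * (2*(y*y)) = u / 2 := by nlinarith [hny]
      rw [h2] at h1
      refine le_trans h1 ?_
      have hs2 : Real.sqrt (w n) * Real.sqrt (w n) = w n := Real.mul_self_sqrt (by linarith)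
      have hspos : 0 < Real.sqrt (w n) := Real.sqrt_pos.2 (by linarith)
      have hu2 : u / 2 ≤ Real.sqrt (w n) / 2 := by
        have := min_le_left (Real.sqrt (w n)) (n:ℝ)
        rw [hudef]; linarith
      calc u / 2 / (w n - 1) ≤ Real.sqrt (w n) / 2 / (w n - 1) := by gcongr
        _ ≤ 1 / Real.sqrt (w n) := by
            rw [div_le_div_iff₀ (by linarith) hspos]
            nlinarith
    linarith
end
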